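/- The function F(t₁,t₂,t₃) = (1/2)t₃²t₁ + (1/2)t₂²t₃ + t₂⁴/(8t₁) + t₂²/(4t₁²) − 1/(60t₁³) (the dual Ã₃ potential) satisfies the WDVV associativity equations on the domain t₁ ≠ 0, with flat metric Π_{ij} = ∂_{t₃}∂_{t_i}∂_{t_j}F = δ_{i+j,4}. -/

import Mathlib

/-- Partial derivative of a function of `n` real variables. -/
noncomputable def pd {n : ℕ} (i : Fin n) (f : (Fin n → ℝ) → ℝ) : (Fin n → ℝ) → ℝ :=
  fun t => deriv (fun s => f (Function.update t i s)) (t i)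

/-- The anti-diagonal metric `Ω^{ij} = δ_{i+j,4}` (1-based), inverse of
`Π_{ij} = ∂₃∂_i∂_j F`. -/
def antiDiag : Matrix (Fin 3) (Fin 3) ℝ := fun a b => if (a : ℕ) + (b : ℕ) = 2 then 1 else 0

namespace WDVVaux

/- explicit first derivatives -/
noncomputable def G0 : (Fin 3 → ℝ) → ℝ := fun u =>
  (1/2)*(u 2)^2 - (u 1)^4/(8*(u 0)^2) - (u 1)^2/(2*(u 0)^3) + 1/(20*(u 0)^4)
noncomputable def G1 : (Fin 3 → ℝ) → ℝ := fun u =>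
  (u 1)*(u 2) + (u 1)^3/(2*(u 0)) + (u 1)/(2*(u 0)^2)
noncomputable def G2 : (Fin 3 → ℝ) → ℝ := fun u =>
  (u 2)*(u 0) + (1/2)*(u 1)^2

/- explicit second derivatives (nontrivial ones) -/
noncomputable def H00 : (Fin 3 → ℝ) → ℝ := fun u =>
  (u 1)^4/(4*(u 0)^3) + 3*(u 1)^2/(2*(u 0)^4) - 1/(5*(u 0)^5)
noncomputable def H01 : (Fin 3 → ℝ) → ℝ := fun u =>
  -(u 1)^3/(2*(u 0)^2) - (u 1)/(u 0)^3
noncomputable def H11 : (Fin 3 → ℝ) → ℝ := fun u =>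
  (u 2) + 3*(u 1)^2/(2*(u 0)) + 1/(2*(u 0)^2)

/- explicit third derivatives (nontrivial ones) -/
noncomputable def c000 : (Fin 3 → ℝ) → ℝ := fun u =>
  -3*(u 1)^4/(4*(u 0)^4) - 6*(u 1)^2/(u 0)^5 + 1/(u 0)^6
noncomputable def c001 : (Fin 3 → ℝ) → ℝ := fun u =>
  (u 1)^3/(u 0)^3 + 3*(u 1)/(u 0)^4
noncomputable def c011 : (Fin 3 → ℝ) → ℝ := fun u =>
  -3*(u 1)^2/(2*(u 0)^2) - 1/(u 0)^3
noncomputable def c111 : (Fin 3 → ℝ) → ℝ := fun u => 3*(u 1)/(u 0)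

/-- table of all third derivatives -/
noncomputable def c3 (t : Fin 3 → ℝ) (i j l : Fin 3) : ℝ :=
  match i.val, j.val, l.val with
  | 0,0,0 => c000 t
  | 0,0,1 => c001 t
  | 0,1,0 => c001 t
  | 1,0,0 => c001 t
  | 0,1,1 => c011 t
  | 1,0,1 => c011 t
  | 1,1,0 => c011 t
  | 1,1,1 => c111 t
  | 0,2,2 => 1
  | 2,0,2 => 1
  | 2,2,0 => 1
  | 1,1,2 => 1
  | 1,2,1 => 1
  | 2,1,1 => 1
  | _,_,_ => 0

lemma pd_congr {f g : (Fin 3 → ℝ) → ℝ} (h : ∀ u : Fin 3 → ℝ, u 0 ≠ 0 → f u = g u)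
    (j : Fin 3) (t : Fin 3 → ℝ) (ht : t 0 ≠ 0) : pd j f t = pd j g t := by
  unfold pd
  apply Filter.EventuallyEq.deriv_eq
  have hev : ∀ᶠ s in nhds (t j), (Function.update t j s) 0 ≠ 0 := by
    rcases eq_or_ne j 0 with rfl | hj
    · simpa using eventually_ne_nhds ht
    · filter_upwards with s
      rw [Function.update_of_ne (Ne.symm hj)]
      exact ht
  filter_upwards [hev] with s hs using h _ hs

lemma hdiv (c a : ℝ) (n : ℕ) (x : ℝ) (hx : x ≠ 0) (ha : a ≠ 0) :
    HasDerivAt (fun s : ℝ => c / (a * s ^ (n+1))) (-(c * a * (n+1) * x^n) / (a * x^(n+1))^2) x := by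
  have hd : HasDerivAt (fun s : ℝ => a * s ^ (n+1)) (a * ((n+1) * x ^ n)) x := by
    simpa using (hasDerivAt_pow (n+1) x).const_mul a
  have h : HasDerivAt (fun s : ℝ => c / (a * s ^ (n+1))) _ x := (hasDerivAt_const x c).div hd (mul_ne_zero ha (pow_ne_zero _ hx))
  convert h using 1
  ring

lemma hlin (c x : ℝ) : HasDerivAt (fun s : ℝ => c * s) c x := by
  simpa using (hasDerivAt_id x).const_mul c

lemma hpow (c : ℝ) (n : ℕ) (x : ℝ) :
    HasDerivAt (fun s : ℝ => c * s ^ (n+1)) (c * (n+1) * x^n) x := by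
  simpa [mul_assoc] using (hasDerivAt_pow (n+1) x).const_mul c

lemma hpowdiv (n : ℕ) (C x : ℝ) :
    HasDerivAt (fun s : ℝ => s ^ (n+1) / C) ((n+1) * x^n / C) x := by
  simpa using (hasDerivAt_pow (n+1) x).div_const C

lemma pd_coord (i k : Fin 3) (t : Fin 3 → ℝ) :
    pd i (fun v => v k) t = if k = i then 1 else 0 := by
  unfold pd
  rcases eq_or_ne k i with rfl | h
  · simp
  · simp [Function.update_of_ne h, h]

section
variable (F : (Fin 3 → ℝ) → ℝ)
variable (hF : ∀ t : Fin 3 → ℝ, F t = (1 / 2) * (t 2) ^ 2 * t 0 + (1 / 2) * (t 1) ^ 2 * t 2 + (t 1) ^ 4 / (8 * t 0) + (t 1) ^ 2 / (4 * (t 0) ^ 2) - 1 / (60 * (t 0) ^ 3))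

include hF in
lemma A0 : ∀ u : Fin 3 → ℝ, u 0 ≠ 0 → pd 0 F u = G0 u := by
  intro u hu
  unfold pd
  have key : (fun s => F (Function.update u 0 s)) =
      (fun s : ℝ => (1/2)*(u 2)^2 * s + (1/2)*(u 1)^2*(u 2)
        + (u 1)^4 / (8 * s^(0+1)) + (u 1)^2 / (4 * s^(1+1)) + (-1) / (60 * s^(2+1))) := by
    funext s
    simp only [hF, Function.update_apply, Fin.ext_iff]
    norm_num
    all_goals ring
  rw [key]
  have h := ((((hlin ((1/2)*(u 2)^2) (u 0)).add
      (hasDerivAt_const (u 0) ((1/2)*(u 1)^2*(u 2)))).add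
      (hdiv ((u 1)^4) 8 0 (u 0) hu (by norm_num))).add
      (hdiv ((u 1)^2) 4 1 (u 0) hu (by norm_num))).add
      (hdiv (-1) 60 2 (u 0) hu (by norm_num))
  erw [h.deriv]
  simp only [G0]
  all_goals push_cast
  all_goals first
    | ring1
    | (field_simp; ring)

include hF in
lemma A1 : ∀ u : Fin 3 → ℝ, u 0 ≠ 0 → pd 1 F u = G1 u := by
  intro u hu
  unfold pd
  have key : (fun s => F (Function.update u 1 s)) =
      (fun s : ℝ => ((1/2)*(u 2)^2*(u 0) - 1/(60*(u 0)^3)) + (1/2)*(u 2) * s^(1+1)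
        + s^(3+1) / (8*(u 0)) + s^(1+1) / (4*(u 0)^2)) := by
    funext s
    simp only [hF, Function.update_apply, Fin.ext_iff]
    norm_num
    all_goals ring
  rw [key]
  have h := (((hasDerivAt_const (u 1) ((1/2)*(u 2)^2*(u 0) - 1/(60*(u 0)^3))).add
      (hpow ((1/2)*(u 2)) 1 (u 1))).add
      (hpowdiv 3 (8*(u 0)) (u 1))).add
      (hpowdiv 1 (4*(u 0)^2) (u 1))
  erw [h.deriv]
  simp only [G1]
  all_goals push_cast
  all_goals first
    | ring1
    | (field_simp; ring)

include hF in
lemma A2 : ∀ u : Fin 3 → ℝ, u 0 ≠ 0 → pd 2 F u = G2 u := by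
  intro u hu
  unfold pd
  have key : (fun s => F (Function.update u 2 s)) =
      (fun s : ℝ => ((u 1)^4/(8*(u 0)) + (u 1)^2/(4*(u 0)^2) - 1/(60*(u 0)^3))
        + (1/2)*(u 0) * s^(1+1) + (1/2)*(u 1)^2 * s) := by
    funext s
    simp only [hF, Function.update_apply, Fin.ext_iff]
    norm_num
    all_goals ring
  rw [key]
  have h := ((hasDerivAt_const (u 2) ((u 1)^4/(8*(u 0)) + (u 1)^2/(4*(u 0)^2) - 1/(60*(u 0)^3))).add
      (hpow ((1/2)*(u 0)) 1 (u 2))).add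
      (hlin ((1/2)*(u 1)^2) (u 2))
  erw [h.deriv]
  simp only [G2]
  all_goals push_cast
  all_goals first
    | ring1
    | (field_simp; ring)

end

lemma B00 : ∀ u : Fin 3 → ℝ, u 0 ≠ 0 → pd 0 G0 u = H00 u := by
  intro u hu
  unfold pd
  have key : (fun s => G0 (Function.update u 0 s)) =
      (fun s : ℝ => (1/2)*(u 2)^2 + (-(u 1)^4) / (8 * s^(1+1))
        + (-(u 1)^2) / (2 * s^(2+1)) + 1 / (20 * s^(3+1))) := by
    funext s
    simp only [G0, Function.update_apply, Fin.ext_iff]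
    norm_num
    all_goals ring
  rw [key]
  have h := (((hasDerivAt_const (u 0) ((1/2)*(u 2)^2)).add
      (hdiv (-(u 1)^4) 8 1 (u 0) hu (by norm_num))).add
      (hdiv (-(u 1)^2) 2 2 (u 0) hu (by norm_num))).add
      (hdiv 1 20 3 (u 0) hu (by norm_num))
  erw [h.deriv]
  simp only [H00]
  all_goals push_cast
  all_goals first
    | ring1
    | (field_simp; ring)

lemma B01 : ∀ u : Fin 3 → ℝ, u 0 ≠ 0 → pd 1 G0 u = H01 u := by
  intro u hu
  unfold pd
  have key : (fun s => G0 (Function.update u 1 s)) =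
      (fun s : ℝ => ((1/2)*(u 2)^2 + 1/(20*(u 0)^4))
        + (-(1/(8*(u 0)^2))) * s^(3+1) + (-(1/(2*(u 0)^3))) * s^(1+1)) := by
    funext s
    simp only [G0, Function.update_apply, Fin.ext_iff]
    norm_num
    all_goals ring
  rw [key]
  have h := ((hasDerivAt_const (u 1) ((1/2)*(u 2)^2 + 1/(20*(u 0)^4))).add
      (hpow (-(1/(8*(u 0)^2))) 3 (u 1))).add
      (hpow (-(1/(2*(u 0)^3))) 1 (u 1))
  erw [h.deriv]
  simp only [H01]
  all_goals push_cast
  all_goals first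
    | ring1
    | (field_simp; ring)

lemma B02 : ∀ u : Fin 3 → ℝ, u 0 ≠ 0 → pd 2 G0 u = u 2 := by
  intro u hu
  unfold pd
  have key : (fun s => G0 (Function.update u 2 s)) =
      (fun s : ℝ => (1/2) * s^(1+1)
        + (- (u 1)^4/(8*(u 0)^2) - (u 1)^2/(2*(u 0)^3) + 1/(20*(u 0)^4))) := by
    funext s
    simp only [G0, Function.update_apply, Fin.ext_iff]
    norm_num
    all_goals ring
  rw [key]
  have h := (hpow (1/2) 1 (u 2)).add
      (hasDerivAt_const (u 2) (- (u 1)^4/(8*(u 0)^2) - (u 1)^2/(2*(u 0)^3) + 1/(20*(u 0)^4)))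
  erw [h.deriv]
  all_goals push_cast
  all_goals ring

lemma B10 : ∀ u : Fin 3 → ℝ, u 0 ≠ 0 → pd 0 G1 u = H01 u := by
  intro u hu
  unfold pd
  have key : (fun s => G1 (Function.update u 0 s)) =
      (fun s : ℝ => (u 1)*(u 2) + (u 1)^3 / (2 * s^(0+1)) + (u 1) / (2 * s^(1+1))) := by
    funext s
    simp only [G1, Function.update_apply, Fin.ext_iff]
    norm_num
    all_goals ring
  rw [key]
  have h := ((hasDerivAt_const (u 0) ((u 1)*(u 2))).add
      (hdiv ((u 1)^3) 2 0 (u 0) hu (by norm_num))).add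
      (hdiv (u 1) 2 1 (u 0) hu (by norm_num))
  erw [h.deriv]
  simp only [H01]
  all_goals push_cast
  all_goals first
    | ring1
    | (field_simp; ring)

lemma B11 : ∀ u : Fin 3 → ℝ, u 0 ≠ 0 → pd 1 G1 u = H11 u := by
  intro u hu
  unfold pd
  have key : (fun s => G1 (Function.update u 1 s)) =
      (fun s : ℝ => (u 2) * s + s^(2+1) / (2*(u 0)) + (1/(2*(u 0)^2)) * s) := by
    funext s
    simp only [G1, Function.update_apply, Fin.ext_iff]
    norm_num
    all_goals ring
  rw [key]
  have h := ((hlin (u 2) (u 1)).add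
      (hpowdiv 2 (2*(u 0)) (u 1))).add
      (hlin (1/(2*(u 0)^2)) (u 1))
  erw [h.deriv]
  simp only [H11]
  all_goals push_cast
  all_goals first
    | ring1
    | (field_simp; ring)

lemma B12 : ∀ u : Fin 3 → ℝ, u 0 ≠ 0 → pd 2 G1 u = u 1 := by
  intro u hu
  unfold pd
  have key : (fun s => G1 (Function.update u 2 s)) =
      (fun s : ℝ => (u 1) * s + ((u 1)^3/(2*(u 0)) + (u 1)/(2*(u 0)^2))) := by
    funext s
    simp only [G1, Function.update_apply, Fin.ext_iff]
    norm_num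
    all_goals ring
  rw [key]
  have h := (hlin (u 1) (u 2)).add
      (hasDerivAt_const (u 2) ((u 1)^3/(2*(u 0)) + (u 1)/(2*(u 0)^2)))
  erw [h.deriv]
  all_goals push_cast
  all_goals ring

lemma B20 : ∀ u : Fin 3 → ℝ, u 0 ≠ 0 → pd 0 G2 u = u 2 := by
  intro u hu
  unfold pd
  have key : (fun s => G2 (Function.update u 0 s)) =
      (fun s : ℝ => (u 2) * s + (1/2)*(u 1)^2) := by
    funext s
    simp only [G2, Function.update_apply, Fin.ext_iff]
    norm_num
  rw [key]
  have h := (hlin (u 2) (u 0)).add (hasDerivAt_const (u 0) ((1/2)*(u 1)^2))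
  erw [h.deriv]
  all_goals push_cast
  all_goals ring

lemma B21 : ∀ u : Fin 3 → ℝ, u 0 ≠ 0 → pd 1 G2 u = u 1 := by
  intro u hu
  unfold pd
  have key : (fun s => G2 (Function.update u 1 s)) =
      (fun s : ℝ => (u 2)*(u 0) + (1/2) * s^(1+1)) := by
    funext s
    simp only [G2, Function.update_apply, Fin.ext_iff]
    norm_num
  rw [key]
  have h := (hasDerivAt_const (u 1) ((u 2)*(u 0))).add (hpow (1/2) 1 (u 1))
  erw [h.deriv]
  all_goals push_cast
  all_goals ring

lemma B22 : ∀ u : Fin 3 → ℝ, u 0 ≠ 0 → pd 2 G2 u = u 0 := by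
  intro u hu
  unfold pd
  have key : (fun s => G2 (Function.update u 2 s)) =
      (fun s : ℝ => (u 0) * s + (1/2)*(u 1)^2) := by
    funext s
    simp only [G2, Function.update_apply, Fin.ext_iff]
    norm_num
    all_goals ring
  rw [key]
  have h := (hlin (u 0) (u 2)).add (hasDerivAt_const (u 2) ((1/2)*(u 1)^2))
  erw [h.deriv]
  all_goals push_cast
  all_goals ring

lemma C00_0 : ∀ u : Fin 3 → ℝ, u 0 ≠ 0 → pd 0 H00 u = c000 u := by
  intro u hu
  unfold pd
  have key : (fun s => H00 (Function.update u 0 s)) =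
      (fun s : ℝ => (u 1)^4 / (4 * s^(2+1)) + (3*(u 1)^2) / (2 * s^(3+1))
        + (-1) / (5 * s^(4+1))) := by
    funext s
    simp only [H00, Function.update_apply, Fin.ext_iff]
    norm_num
    all_goals ring
  rw [key]
  have h := ((hdiv ((u 1)^4) 4 2 (u 0) hu (by norm_num)).add
      (hdiv (3*(u 1)^2) 2 3 (u 0) hu (by norm_num))).add
      (hdiv (-1) 5 4 (u 0) hu (by norm_num))
  erw [h.deriv]
  simp only [c000]
  all_goals push_cast
  all_goals first
    | ring1
    | (field_simp; ring)

lemma C00_1 : ∀ u : Fin 3 → ℝ, u 0 ≠ 0 → pd 1 H00 u = c001 u := by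
  intro u hu
  unfold pd
  have key : (fun s => H00 (Function.update u 1 s)) =
      (fun s : ℝ => (-(1/(5*(u 0)^5))) + (1/(4*(u 0)^3)) * s^(3+1)
        + (3/(2*(u 0)^4)) * s^(1+1)) := by
    funext s
    simp only [H00, Function.update_apply, Fin.ext_iff]
    norm_num
    all_goals ring
  rw [key]
  have h := ((hasDerivAt_const (u 1) (-(1/(5*(u 0)^5)))).add
      (hpow (1/(4*(u 0)^3)) 3 (u 1))).add
      (hpow (3/(2*(u 0)^4)) 1 (u 1))
  erw [h.deriv]
  simp only [c001]
  all_goals push_cast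
  all_goals first
    | ring1
    | (field_simp; ring)

lemma C00_2 : ∀ u : Fin 3 → ℝ, u 0 ≠ 0 → pd 2 H00 u = 0 := by
  intro u hu
  unfold pd
  have key : (fun s => H00 (Function.update u 2 s)) =
      (fun _ : ℝ => (u 1)^4/(4*(u 0)^3) + 3*(u 1)^2/(2*(u 0)^4) - 1/(5*(u 0)^5)) := by
    funext s
    simp only [H00, Function.update_apply, Fin.ext_iff]
    norm_num
  rw [key]
  exact deriv_const _ _

lemma C01_0 : ∀ u : Fin 3 → ℝ, u 0 ≠ 0 → pd 0 H01 u = c001 u := by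
  intro u hu
  unfold pd
  have key : (fun s => H01 (Function.update u 0 s)) =
      (fun s : ℝ => (-(u 1)^3) / (2 * s^(1+1)) + (-(u 1)) / (1 * s^(2+1))) := by
    funext s
    simp only [H01, Function.update_apply, Fin.ext_iff]
    norm_num
    all_goals ring
  rw [key]
  have h := (hdiv (-(u 1)^3) 2 1 (u 0) hu (by norm_num)).add
      (hdiv (-(u 1)) 1 2 (u 0) hu (by norm_num))
  erw [h.deriv]
  simp only [c001]
  all_goals push_cast
  all_goals first
    | ring1
    | (field_simp; ring)

lemma C01_1 : ∀ u : Fin 3 → ℝ, u 0 ≠ 0 → pd 1 H01 u = c011 u := by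
  intro u hu
  unfold pd
  have key : (fun s => H01 (Function.update u 1 s)) =
      (fun s : ℝ => (-(1/(2*(u 0)^2))) * s^(2+1) + (-(1/(u 0)^3)) * s) := by
    funext s
    simp only [H01, Function.update_apply, Fin.ext_iff]
    norm_num
    all_goals ring
  rw [key]
  have h := (hpow (-(1/(2*(u 0)^2))) 2 (u 1)).add (hlin (-(1/(u 0)^3)) (u 1))
  erw [h.deriv]
  simp only [c011]
  all_goals push_cast
  all_goals first
    | ring1
    | (field_simp; ring)

lemma C01_2 : ∀ u : Fin 3 → ℝ, u 0 ≠ 0 → pd 2 H01 u = 0 := by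
  intro u hu
  unfold pd
  have key : (fun s => H01 (Function.update u 2 s)) =
      (fun _ : ℝ => -(u 1)^3/(2*(u 0)^2) - (u 1)/(u 0)^3) := by
    funext s
    simp only [H01, Function.update_apply, Fin.ext_iff]
    norm_num
  rw [key]
  exact deriv_const _ _

lemma C11_0 : ∀ u : Fin 3 → ℝ, u 0 ≠ 0 → pd 0 H11 u = c011 u := by
  intro u hu
  unfold pd
  have key : (fun s => H11 (Function.update u 0 s)) =
      (fun s : ℝ => (u 2) + (3*(u 1)^2) / (2 * s^(0+1)) + 1 / (2 * s^(1+1))) := by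
    funext s
    simp only [H11, Function.update_apply, Fin.ext_iff]
    norm_num
    all_goals ring
  rw [key]
  have h := ((hasDerivAt_const (u 0) (u 2)).add
      (hdiv (3*(u 1)^2) 2 0 (u 0) hu (by norm_num))).add
      (hdiv 1 2 1 (u 0) hu (by norm_num))
  erw [h.deriv]
  simp only [c011]
  all_goals push_cast
  all_goals first
    | ring1
    | (field_simp; ring)

lemma C11_1 : ∀ u : Fin 3 → ℝ, u 0 ≠ 0 → pd 1 H11 u = c111 u := by
  intro u hu
  unfold pd
  have key : (fun s => H11 (Function.update u 1 s)) =
      (fun s : ℝ => ((u 2) + 1/(2*(u 0)^2)) + (3/(2*(u 0))) * s^(1+1)) := by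
    funext s
    simp only [H11, Function.update_apply, Fin.ext_iff]
    norm_num
    all_goals ring
  rw [key]
  have h := (hasDerivAt_const (u 1) ((u 2) + 1/(2*(u 0)^2))).add
      (hpow (3/(2*(u 0))) 1 (u 1))
  erw [h.deriv]
  simp only [c111]
  all_goals push_cast
  all_goals first
    | ring1
    | (field_simp; ring)

lemma C11_2 : ∀ u : Fin 3 → ℝ, u 0 ≠ 0 → pd 2 H11 u = 1 := by
  intro u hu
  unfold pd
  have key : (fun s => H11 (Function.update u 2 s)) =
      (fun s : ℝ => 1 * s + (3*(u 1)^2/(2*(u 0)) + 1/(2*(u 0)^2))) := by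
    funext s
    simp only [H11, Function.update_apply, Fin.ext_iff]
    norm_num
    all_goals ring
  rw [key]
  have h := (hlin 1 (u 2)).add
      (hasDerivAt_const (u 2) (3*(u 1)^2/(2*(u 0)) + 1/(2*(u 0)^2)))
  erw [h.deriv]
  all_goals push_cast
  all_goals ring

section
variable (F : (Fin 3 → ℝ) → ℝ)
variable (hF : ∀ t : Fin 3 → ℝ, F t = (1 / 2) * (t 2) ^ 2 * t 0 + (1 / 2) * (t 1) ^ 2 * t 2 + (t 1) ^ 4 / (8 * t 0) + (t 1) ^ 2 / (4 * (t 0) ^ 2) - 1 / (60 * (t 0) ^ 3))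

include hF in
lemma third (t : Fin 3 → ℝ) (ht : t 0 ≠ 0) :
    ∀ i j l : Fin 3, pd i (pd j (pd l F)) t = c3 t i j l := by
  have AB00 : ∀ u : Fin 3 → ℝ, u 0 ≠ 0 → pd 0 (pd 0 F) u = H00 u :=
    fun u hu => (pd_congr (A0 F hF) 0 u hu).trans (B00 u hu)
  have AB10 : ∀ u : Fin 3 → ℝ, u 0 ≠ 0 → pd 1 (pd 0 F) u = H01 u :=
    fun u hu => (pd_congr (A0 F hF) 1 u hu).trans (B01 u hu)
  have AB20 : ∀ u : Fin 3 → ℝ, u 0 ≠ 0 → pd 2 (pd 0 F) u = u 2 :=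
    fun u hu => (pd_congr (A0 F hF) 2 u hu).trans (B02 u hu)
  have AB01 : ∀ u : Fin 3 → ℝ, u 0 ≠ 0 → pd 0 (pd 1 F) u = H01 u :=
    fun u hu => (pd_congr (A1 F hF) 0 u hu).trans (B10 u hu)
  have AB11 : ∀ u : Fin 3 → ℝ, u 0 ≠ 0 → pd 1 (pd 1 F) u = H11 u :=
    fun u hu => (pd_congr (A1 F hF) 1 u hu).trans (B11 u hu)
  have AB21 : ∀ u : Fin 3 → ℝ, u 0 ≠ 0 → pd 2 (pd 1 F) u = u 1 :=
    fun u hu => (pd_congr (A1 F hF) 2 u hu).trans (B12 u hu)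
  have AB02 : ∀ u : Fin 3 → ℝ, u 0 ≠ 0 → pd 0 (pd 2 F) u = u 2 :=
    fun u hu => (pd_congr (A2 F hF) 0 u hu).trans (B20 u hu)
  have AB12 : ∀ u : Fin 3 → ℝ, u 0 ≠ 0 → pd 1 (pd 2 F) u = u 1 :=
    fun u hu => (pd_congr (A2 F hF) 1 u hu).trans (B21 u hu)
  have AB22 : ∀ u : Fin 3 → ℝ, u 0 ≠ 0 → pd 2 (pd 2 F) u = u 0 :=
    fun u hu => (pd_congr (A2 F hF) 2 u hu).trans (B22 u hu)
  intro i j l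
  have hi : i = 0 ∨ i = 1 ∨ i = 2 := by revert i; decide
  have hj : j = 0 ∨ j = 1 ∨ j = 2 := by revert j; decide
  have hl : l = 0 ∨ l = 1 ∨ l = 2 := by revert l; decide
  rcases hj with rfl | rfl | rfl <;> rcases hl with rfl | rfl | rfl
  · rw [pd_congr AB00 i t ht]
    rcases hi with rfl | rfl | rfl
    · exact C00_0 t ht
    · exact C00_1 t ht
    · exact C00_2 t ht
  · rw [pd_congr AB01 i t ht]
    rcases hi with rfl | rfl | rfl
    · exact C01_0 t ht
    · exact C01_1 t ht
    · exact C01_2 t ht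
  · rw [pd_congr AB02 i t ht]
    rcases hi with rfl | rfl | rfl <;> rw [pd_coord] <;> norm_num [c3, Fin.ext_iff]
  · rw [pd_congr AB10 i t ht]
    rcases hi with rfl | rfl | rfl
    · exact C01_0 t ht
    · exact C01_1 t ht
    · exact C01_2 t ht
  · rw [pd_congr AB11 i t ht]
    rcases hi with rfl | rfl | rfl
    · exact C11_0 t ht
    · exact C11_1 t ht
    · exact C11_2 t ht
  · rw [pd_congr AB12 i t ht]
    rcases hi with rfl | rfl | rfl <;> rw [pd_coord] <;> norm_num [c3, Fin.ext_iff]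
  · rw [pd_congr AB20 i t ht]
    rcases hi with rfl | rfl | rfl <;> rw [pd_coord] <;> norm_num [c3, Fin.ext_iff]
  · rw [pd_congr AB21 i t ht]
    rcases hi with rfl | rfl | rfl <;> rw [pd_coord] <;> norm_num [c3, Fin.ext_iff]
  · rw [pd_congr AB22 i t ht]
    rcases hi with rfl | rfl | rfl <;> rw [pd_coord] <;> norm_num [c3, Fin.ext_iff]

end

lemma c3_000 (t : Fin 3 → ℝ) : c3 t 0 0 0 = c000 t := rfl
lemma c3_001 (t : Fin 3 → ℝ) : c3 t 0 0 1 = c001 t := rfl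
lemma c3_002 (t : Fin 3 → ℝ) : c3 t 0 0 2 = (0:ℝ) := rfl
lemma c3_010 (t : Fin 3 → ℝ) : c3 t 0 1 0 = c001 t := rfl
lemma c3_011 (t : Fin 3 → ℝ) : c3 t 0 1 1 = c011 t := rfl
lemma c3_012 (t : Fin 3 → ℝ) : c3 t 0 1 2 = (0:ℝ) := rfl
lemma c3_020 (t : Fin 3 → ℝ) : c3 t 0 2 0 = (0:ℝ) := rfl
lemma c3_021 (t : Fin 3 → ℝ) : c3 t 0 2 1 = (0:ℝ) := rfl
lemma c3_022 (t : Fin 3 → ℝ) : c3 t 0 2 2 = (1:ℝ) := rfl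
lemma c3_100 (t : Fin 3 → ℝ) : c3 t 1 0 0 = c001 t := rfl
lemma c3_101 (t : Fin 3 → ℝ) : c3 t 1 0 1 = c011 t := rfl
lemma c3_102 (t : Fin 3 → ℝ) : c3 t 1 0 2 = (0:ℝ) := rfl
lemma c3_110 (t : Fin 3 → ℝ) : c3 t 1 1 0 = c011 t := rfl
lemma c3_111 (t : Fin 3 → ℝ) : c3 t 1 1 1 = c111 t := rfl
lemma c3_112 (t : Fin 3 → ℝ) : c3 t 1 1 2 = (1:ℝ) := rfl
lemma c3_120 (t : Fin 3 → ℝ) : c3 t 1 2 0 = (0:ℝ) := rfl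
lemma c3_121 (t : Fin 3 → ℝ) : c3 t 1 2 1 = (1:ℝ) := rfl
lemma c3_122 (t : Fin 3 → ℝ) : c3 t 1 2 2 = (0:ℝ) := rfl
lemma c3_200 (t : Fin 3 → ℝ) : c3 t 2 0 0 = (0:ℝ) := rfl
lemma c3_201 (t : Fin 3 → ℝ) : c3 t 2 0 1 = (0:ℝ) := rfl
lemma c3_202 (t : Fin 3 → ℝ) : c3 t 2 0 2 = (1:ℝ) := rfl
lemma c3_210 (t : Fin 3 → ℝ) : c3 t 2 1 0 = (0:ℝ) := rfl
lemma c3_211 (t : Fin 3 → ℝ) : c3 t 2 1 1 = (1:ℝ) := rfl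
lemma c3_212 (t : Fin 3 → ℝ) : c3 t 2 1 2 = (0:ℝ) := rfl
lemma c3_220 (t : Fin 3 → ℝ) : c3 t 2 2 0 = (1:ℝ) := rfl
lemma c3_221 (t : Fin 3 → ℝ) : c3 t 2 2 1 = (0:ℝ) := rfl
lemma c3_222 (t : Fin 3 → ℝ) : c3 t 2 2 2 = (0:ℝ) := rfl
lemma aD_00 : antiDiag 0 0 = (0:ℝ) := rfl
lemma aD_01 : antiDiag 0 1 = (0:ℝ) := rfl
lemma aD_02 : antiDiag 0 2 = (1:ℝ) := rfl
lemma aD_10 : antiDiag 1 0 = (0:ℝ) := rfl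
lemma aD_11 : antiDiag 1 1 = (1:ℝ) := rfl
lemma aD_12 : antiDiag 1 2 = (0:ℝ) := rfl
lemma aD_20 : antiDiag 2 0 = (1:ℝ) := rfl
lemma aD_21 : antiDiag 2 1 = (0:ℝ) := rfl
lemma aD_22 : antiDiag 2 2 = (0:ℝ) := rfl

end WDVVaux

set_option maxHeartbeats 1000000 in
/-- The dual Ã₃ potential satisfies the WDVV equations on `t₁ ≠ 0` with flat
metric `Π_{ij} = ∂₃∂_i∂_j F = δ_{i+j,4}`. -/
theorem stmt_12 (F : (Fin 3 → ℝ) → ℝ)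
    (hF : ∀ t : Fin 3 → ℝ, F t = (1 / 2) * (t 2) ^ 2 * t 0 + (1 / 2) * (t 1) ^ 2 * t 2 + (t 1) ^ 4 / (8 * t 0) + (t 1) ^ 2 / (4 * (t 0) ^ 2) - 1 / (60 * (t 0) ^ 3)) :
    ∀ t : Fin 3 → ℝ, t 0 ≠ 0 →
       ∀ i j q n : Fin 3,
        (∑ l : Fin 3, ∑ p : Fin 3,
          pd i (pd j (pd l F)) t * antiDiag l p * pd p (pd q (pd n F)) t) =
        (∑ l : Fin 3, ∑ p : Fin 3,
          pd n (pd j (pd l F)) t * antiDiag l p * pd p (pd q (pd i F)) t) := by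
  intro t ht i j q n
  simp only [Fin.sum_univ_three, WDVVaux.third F hF t ht]
  have hi : i = 0 ∨ i = 1 ∨ i = 2 := by revert i; decide
  have hj : j = 0 ∨ j = 1 ∨ j = 2 := by revert j; decide
  have hq : q = 0 ∨ q = 1 ∨ q = 2 := by revert q; decide
  have hn : n = 0 ∨ n = 1 ∨ n = 2 := by revert n; decide
  rcases hi with rfl | rfl | rfl <;> rcases hj with rfl | rfl | rfl <;>
    rcases hq with rfl | rfl | rfl <;> rcases hn with rfl | rfl | rfl <;>
    simp only [WDVVaux.c3_000, WDVVaux.c3_001, WDVVaux.c3_002, WDVVaux.c3_010,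
      WDVVaux.c3_011, WDVVaux.c3_012, WDVVaux.c3_020, WDVVaux.c3_021, WDVVaux.c3_022,
      WDVVaux.c3_100, WDVVaux.c3_101, WDVVaux.c3_102, WDVVaux.c3_110, WDVVaux.c3_111,
      WDVVaux.c3_112, WDVVaux.c3_120, WDVVaux.c3_121, WDVVaux.c3_122, WDVVaux.c3_200,
      WDVVaux.c3_201, WDVVaux.c3_202, WDVVaux.c3_210, WDVVaux.c3_211, WDVVaux.c3_212,
      WDVVaux.c3_220, WDVVaux.c3_221, WDVVaux.c3_222, WDVVaux.aD_00, WDVVaux.aD_01,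
      WDVVaux.aD_02, WDVVaux.aD_10, WDVVaux.aD_11, WDVVaux.aD_12, WDVVaux.aD_20,
      WDVVaux.aD_21, WDVVaux.aD_22, mul_zero, zero_mul, mul_one, one_mul, add_zero,
      zero_add] <;>
    first
      | rfl
      | ring1
      | (simp only [WDVVaux.c000, WDVVaux.c001, WDVVaux.c011, WDVVaux.c111]
         field_simp
         ring)
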